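/- Let k, n be integers with 2 ≤ k ≤ n/2, let R be a commutative ring, and let M be a k × n matrix over R. For every r ∈ ℤ/nℤ and every m in the cyclic closed interval [r+k−1, r−1], the determinant of the k × k matrix whose (i,j) entry (1 ≤ i,j ≤ k) is P([r+i−1]^{k−1} ∪ {m+j−1}) equals (∏_{l=0}^{k−2} P([r+l]^k)) · P([m]^k). -/

import Mathlib

/-- Representative of `x : ZMod n` in `{1, …, n}`. -/
def rep (n : ℕ) (x : ZMod n) : ℕ := if x.val = 0 then n else x.val

/-- The cyclic segment `[r]^ℓ = {r, r+1, …, r+ℓ-1}` in `ZMod n`. -/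
def cSeg (n : ℕ) (r : ZMod n) (ℓ : ℕ) : Finset (ZMod n) :=
  (Finset.range ℓ).image (fun t : ℕ => r + (t : ZMod n))

/-- The cyclic closed interval `[a,b] = {a, a+1, …, b}` in `ZMod n`. -/
def cIcc (n : ℕ) (a b : ZMod n) : Finset (ZMod n) := cSeg n a ((b - a).val + 1)

/-- The Plücker coordinate `P(I)`: the determinant of the `k × k` submatrix of `M` on the
columns indexed by `I`, taken in increasing order of the representatives in `{1,…,n}`;
it is `0` if `I` is not a `k`-subset. -/
noncomputable def pluck {R : Type*} [CommRing R] {k n : ℕ}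
    (M : Matrix (Fin k) (ZMod n) R) (I : Finset (ZMod n)) : R :=
  if h : (I.image (rep n)).card = k ∧ I.card = k then
    Matrix.det (Matrix.of fun i j : Fin k =>
      M i ((((I.image (rep n)).orderIsoOfFin h.1 j : ℕ) : ZMod n)))
  else 0

section Foundation

variable {n : ℕ} [NeZero n]

lemma rep_natCast {c : ℕ} (h1 : 1 ≤ c) (h2 : c ≤ n) : rep n ((c : ℕ) : ZMod n) = c := by
  have hn : 0 < n := lt_of_lt_of_le h1 h2
  unfold rep
  rcases eq_or_lt_of_le h2 with rfl | h
  · simp [ZMod.natCast_self]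
  · rw [ZMod.val_natCast_of_lt h, if_neg (by omega : ¬ c = 0)]

lemma cast_rep (x : ZMod n) : ((rep n x : ℕ) : ZMod n) = x := by
  unfold rep
  split_ifs with h
  · rw [ZMod.natCast_self]
    exact ((ZMod.val_eq_zero x).mp h).symm
  · exact ZMod.natCast_rightInverse x

lemma rep_pos (x : ZMod n) : 1 ≤ rep n x := by
  unfold rep; split
  · exact Nat.one_le_iff_ne_zero.mpr (NeZero.ne n)
  · omega

lemma rep_le (x : ZMod n) : rep n x ≤ n := by
  have := ZMod.val_lt x
  unfold rep; split <;> omega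

lemma rep_injective : Function.Injective (rep n) := by
  intro x y h
  have hx := ZMod.val_lt x
  have hy := ZMod.val_lt y
  have : x.val = y.val := by unfold rep at h; split at h <;> split at h <;> omega
  have := congrArg (fun t : ℕ => (t : ZMod n)) this
  simpa [ZMod.natCast_rightInverse x, ZMod.natCast_rightInverse y] using this

lemma pluck_eq_det_of_strictMono {R : Type*} [CommRing R] {k : ℕ}
    (M : Matrix (Fin k) (ZMod n) R) (f : Fin k → ZMod n)
    (hmono : StrictMono fun j => rep n (f j)) :
    pluck M (Finset.image f Finset.univ) = Matrix.det (Matrix.of fun i j => M i (f j)) := by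
  have hf : Function.Injective f := by
    intro a b hab
    exact hmono.injective (by simp [hab])
  set I := Finset.image f Finset.univ with hI
  have hIcard : I.card = k := by
    rw [hI, Finset.card_image_of_injective _ hf, Finset.card_univ, Fintype.card_fin]
  have hrepcard : (I.image (rep n)).card = k := by
    rw [Finset.card_image_of_injective _ rep_injective, hIcard]
  rw [pluck, dif_pos ⟨hrepcard, hIcard⟩]
  congr 1
  ext i j
  simp only [Matrix.of_apply]
  congr 1
  have key : (fun j : Fin k => rep n (f j)) = ⇑((I.image (rep n)).orderEmbOfFin hrepcard) := by
    apply Finset.orderEmbOfFin_unique hrepcard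
    · intro x
      exact Finset.mem_image_of_mem _ (by simp [hI])
    · exact hmono
  rw [Finset.coe_orderIsoOfFin_apply, ← congrFun key j]
  exact cast_rep (f j)

open Fin.NatCast in
lemma rotpow_apply {k : ℕ} (w : ℕ) (j : Fin (k + 1)) :
    ((finRotate (k + 1)) ^ w) j = j + (w : Fin (k + 1)) := by
  induction w with
  | zero => simp
  | succ w ih =>
    rw [pow_succ', Equiv.Perm.mul_apply, ih, finRotate_succ_apply]
    push_cast
    simp only [Nat.cast_succ, add_assoc]

lemma image_univ_equiv_comp {α : Type*} [DecidableEq α] {k : ℕ} (f : Fin k → α) (σ : Equiv.Perm (Fin k)) :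
    Finset.image (fun j => f (σ j)) Finset.univ = Finset.image f Finset.univ := by
  ext x
  simp only [Finset.mem_image, Finset.mem_univ, true_and]
  constructor
  · rintro ⟨j, rfl⟩; exact ⟨σ j, rfl⟩
  · rintro ⟨j, rfl⟩; exact ⟨σ.symm j, by simp⟩

lemma pluck_eq_det_rot {R : Type*} [CommRing R] {k : ℕ}
    (M : Matrix (Fin (k+1)) (ZMod n) R) (f : Fin (k+1) → ZMod n) (w : ℕ)
    (hmono : StrictMono fun j => rep n (f (((finRotate (k+1)) ^ w) j))) :
    pluck M (Finset.image f Finset.univ) =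
      (-1 : R) ^ (k * w) * Matrix.det (Matrix.of fun i j => M i (f j)) := by
  rw [← image_univ_equiv_comp f ((finRotate (k+1)) ^ w),
    pluck_eq_det_of_strictMono M _ hmono]
  have : (Matrix.of fun i j => M i (f (((finRotate (k+1)) ^ w) j)))
      = (Matrix.of fun i j => M i (f j)).submatrix id ⇑((finRotate (k+1)) ^ w) := rfl
  rw [this, Matrix.det_permute']
  have hsign : Equiv.Perm.sign ((finRotate (k+1)) ^ w) = (-1 : ℤˣ) ^ (k * w) := by
    rw [map_pow, sign_finRotate, ← pow_mul, Nat.add_sub_cancel]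
  rw [hsign]
  congr 1
  rcases Nat.even_or_odd (k * w) with he | ho
  · simp [he.neg_one_pow, Even.neg_one_pow he]
  · simp [ho.neg_one_pow, Odd.neg_one_pow ho]

end Foundation

section PartB

variable {R : Type*} [CommRing R] {k n : ℕ}

def Qmat (M : Matrix (Fin (k+1)) (ZMod n) R) (s : ZMod n) : Matrix (Fin (k+1)) (Fin (k+1)) R :=
  Matrix.of fun a t => M a (s + ((t : ℕ) : ZMod n))

def Dmat (M : Matrix (Fin (k+1)) (ZMod n) R) (c : ZMod n) (i : ℕ) (x : ZMod n) :
    Matrix (Fin (k+1)) (Fin (k+1)) R :=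
  Matrix.of fun a t => if (t : ℕ) = k then M a x else M a (c + (i : ZMod n) + ((t : ℕ) : ZMod n))

def Cof (M : Matrix (Fin (k+1)) (ZMod n) R) (c : ZMod n) (i : ℕ) (a : Fin (k+1)) : R :=
  (-1) ^ ((a : ℕ) + k) *
    (Matrix.of fun (b t : Fin k) =>
      M (a.succAbove b) (c + (i : ZMod n) + ((t : ℕ) : ZMod n))).det

def Cmat (M : Matrix (Fin (k+1)) (ZMod n) R) (c : ZMod n) : Matrix (Fin (k+1)) (Fin (k+1)) R :=
  Matrix.of fun i a => Cof M c (i : ℕ) a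

lemma Dmat_det_eq_sum (M : Matrix (Fin (k+1)) (ZMod n) R) (c : ZMod n) (i : ℕ) (x : ZMod n) :
    (Dmat M c i x).det = ∑ a, M a x * Cof M c i a := by
  rw [Matrix.det_succ_column (Dmat M c i x) (Fin.last k)]
  apply Finset.sum_congr rfl
  intro a _
  have h1 : Dmat M c i x a (Fin.last k) = M a x := by simp [Dmat]
  have h2 : (Dmat M c i x).submatrix a.succAbove (Fin.last k).succAbove
      = Matrix.of fun (b t : Fin k) =>
          M (a.succAbove b) (c + (i : ZMod n) + ((t : ℕ) : ZMod n)) := by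
    ext b t
    simp only [Matrix.submatrix_apply, Fin.succAbove_last, Dmat, Matrix.of_apply,
      Fin.coe_castSucc]
    rw [if_neg (Nat.ne_of_lt t.isLt)]
  rw [h1, h2, Cof, Fin.val_last]
  ring

lemma det_submatrix_rotpow (A : Matrix (Fin (k+1)) (Fin (k+1)) R) (w : ℕ) :
    (A.submatrix id ⇑((finRotate (k+1)) ^ w)).det = (-1 : R) ^ (k * w) * A.det := by
  rw [Matrix.det_permute']
  have hsign : Equiv.Perm.sign ((finRotate (k+1)) ^ w) = (-1 : ℤˣ) ^ (k * w) := by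
    rw [map_pow, sign_finRotate, ← pow_mul, Nat.add_sub_cancel]
  rw [hsign]
  congr 1
  rcases Nat.even_or_odd (k * w) with he | ho
  · simp [he.neg_one_pow, Even.neg_one_pow he]
  · simp [ho.neg_one_pow, Odd.neg_one_pow ho]

open Fin.NatCast in
lemma rotpow_k_apply (j : Fin (k+1)) :
    (((finRotate (k+1)) ^ k) j : ℕ) = if (j : ℕ) = 0 then k else (j : ℕ) - 1 := by
  rw [rotpow_apply]
  have h1 : ((k : Fin (k+1)) : ℕ) = k := by
    rw [Fin.val_natCast]
    exact Nat.mod_eq_of_lt (by omega)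
  rw [Fin.val_add, h1]
  rcases Nat.eq_zero_or_pos (j : ℕ) with h | h
  · rw [h, if_pos rfl]
    simpa using Nat.mod_eq_of_lt (by omega)
  · rw [if_neg (by omega)]
    have h2 : (j : ℕ) + k = ((j : ℕ) - 1) + 1 * (k + 1) := by omega
    rw [h2, Nat.add_mul_mod_self_right]
    exact Nat.mod_eq_of_lt (by have := j.isLt; omega)

lemma Dmat_det_zero (M : Matrix (Fin (k+1)) (ZMod n) R) (c : ZMod n) (i j : ℕ)
    (hij : i ≤ j) (hjk : j < i + k) :
    (Dmat M c i (c + (j : ZMod n))).det = 0 := by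
  apply Matrix.det_zero_of_column_eq (i := (⟨j - i, by omega⟩ : Fin (k+1))) (j := Fin.last k)
  · intro h
    have h2 : j - i = k := congrArg Fin.val h
    omega
  · intro a
    have hv : ((⟨j - i, by omega⟩ : Fin (k+1)) : ℕ) = j - i := rfl
    simp only [Dmat, Matrix.of_apply, Fin.val_last, if_pos rfl, hv]
    rw [if_neg (by omega)]
    congr 1
    rw [Nat.cast_sub hij]
    ring

lemma detCmat_mul (M : Matrix (Fin (k+1)) (ZMod n) R) (c : ZMod n) :
    (Qmat M c).det * (Cmat M c).det =
      (Qmat M c).det * ∏ l ∈ Finset.range k, (Qmat M (c + (l : ZMod n))).det := by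
  set P : Matrix (Fin (k+1)) (Fin (k+1)) R := Cmat M c * Qmat M c with hPdef
  have hP : ∀ i j : Fin (k+1), P i j = (Dmat M c (i : ℕ) (c + ((j : ℕ) : ZMod n))).det := by
    intro i j
    rw [hPdef, Matrix.mul_apply, Dmat_det_eq_sum]
    apply Finset.sum_congr rfl
    intro a _
    simp only [Cmat, Qmat, Matrix.of_apply]
    ring
  set ρ := (finRotate (k+1)) ^ k with hρ
  set P' := P.submatrix id ⇑ρ with hP'def
  have htri : P'.BlockTriangular OrderDual.toDual := by
    intro i j hij
    have hij' : (i : ℕ) < (j : ℕ) := hij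
    rw [hP'def, Matrix.submatrix_apply, id_eq, hP]
    have hv : ((ρ j : Fin (k+1)) : ℕ) = (j : ℕ) - 1 := by
      rw [hρ, rotpow_k_apply, if_neg (by omega)]
    rw [hv]
    exact Dmat_det_zero M c _ _ (by omega) (by have := j.isLt; omega)
  have hdiag0 : P' 0 0 = (Qmat M c).det := by
    rw [hP'def, Matrix.submatrix_apply, id_eq, hP]
    have hv : ((ρ (0 : Fin (k+1)) : Fin (k+1)) : ℕ) = k := by
      rw [hρ, rotpow_k_apply]
      simp
    rw [hv]
    congr 1
    ext a t
    simp only [Dmat, Qmat, Matrix.of_apply, Fin.val_zero, Nat.cast_zero, add_zero]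
    split_ifs with ht
    · rw [ht]
    · rfl
  have hdiagsucc : ∀ i : Fin k, P' i.succ i.succ
      = (-1 : R) ^ k * (Qmat M (c + ((i : ℕ) : ZMod n))).det := by
    intro i
    rw [hP'def, Matrix.submatrix_apply, id_eq, hP]
    have hv : ((ρ i.succ : Fin (k+1)) : ℕ) = (i : ℕ) := by
      rw [hρ, rotpow_k_apply, if_neg (by simp [Fin.val_succ])]
      simp [Fin.val_succ]
    rw [hv]
    have hm : Dmat M c (i.succ : ℕ) (c + ((i : ℕ) : ZMod n))
        = (Qmat M (c + ((i : ℕ) : ZMod n))).submatrix id ⇑(finRotate (k+1)) := by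
      ext a t
      simp only [Dmat, Qmat, Matrix.of_apply, Matrix.submatrix_apply, id_eq]
      by_cases ht : (t : ℕ) = k
      · rw [if_pos ht]
        have hlast : t = Fin.last k := Fin.ext ht
        rw [hlast, finRotate_last]
        simp
      · rw [if_neg ht]
        have htlt : t < Fin.last k := by
          rw [Fin.lt_iff_val_lt_val, Fin.val_last]
          exact lt_of_le_of_ne (Nat.lt_succ_iff.mp t.isLt) ht
        rw [finRotate_succ_apply, Fin.val_add_one_of_lt htlt]
        congr 1
        rw [Fin.val_succ]
        push_cast
        ring
    rw [hm]
    have := det_submatrix_rotpow (Qmat M (c + ((i : ℕ) : ZMod n))) 1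
    rw [pow_one] at this
    rw [this, mul_one]
  have hPdet : P.det = (Cmat M c).det * (Qmat M c).det := by rw [hPdef, Matrix.det_mul]
  have hP'det : P'.det = (-1 : R) ^ (k * k) * P.det := by
    rw [hP'def, hρ, det_submatrix_rotpow]
  have heven : (-1 : R) ^ (k * k) * (-1 : R) ^ (k * k) = 1 := by
    rw [← pow_add]
    exact Even.neg_one_pow ⟨k * k, rfl⟩
  have hdiagprod : P'.det = (Qmat M c).det *
      ((-1 : R) ^ (k * k) * ∏ l ∈ Finset.range k, (Qmat M (c + (l : ZMod n))).det) := by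
    rw [Matrix.det_of_lowerTriangular P' htri, Fin.prod_univ_succ, hdiag0]
    congr 1
    calc (∏ i : Fin k, P' i.succ i.succ)
        = ∏ i : Fin k, ((-1 : R) ^ k * (Qmat M (c + ((i : ℕ) : ZMod n))).det) :=
          Finset.prod_congr rfl (fun i _ => hdiagsucc i)
      _ = ((-1 : R) ^ k) ^ k * ∏ i : Fin k, (Qmat M (c + ((i : ℕ) : ZMod n))).det := by
          rw [Finset.prod_mul_distrib, Finset.prod_const, Finset.card_univ, Fintype.card_fin]
      _ = (-1 : R) ^ (k * k) * ∏ l ∈ Finset.range k, (Qmat M (c + (l : ZMod n))).det := by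
          rw [← pow_mul, Fin.prod_univ_eq_prod_range (fun l => (Qmat M (c + (l : ZMod n))).det) k]
  have h6 : P.det = (-1 : R) ^ (k * k) * P'.det := by
    rw [hP'det, ← mul_assoc, heven, one_mul]
  calc (Qmat M c).det * (Cmat M c).det = P.det := by rw [hPdet]; ring
    _ = (-1 : R) ^ (k * k) * P'.det := h6
    _ = (-1 : R) ^ (k * k) * ((Qmat M c).det *
        ((-1 : R) ^ (k * k) * ∏ l ∈ Finset.range k, (Qmat M (c + (l : ZMod n))).det)) := by
        rw [hdiagprod]
    _ = ((-1 : R) ^ (k * k) * (-1 : R) ^ (k * k)) * ((Qmat M c).det *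
        ∏ l ∈ Finset.range k, (Qmat M (c + (l : ZMod n))).det) := by ring
    _ = (Qmat M c).det * ∏ l ∈ Finset.range k, (Qmat M (c + (l : ZMod n))).det := by
        rw [heven, one_mul]

section Transfer

variable {S : Type*} [CommRing S]

lemma Qmat_map (φ : R →+* S) (M : Matrix (Fin (k+1)) (ZMod n) R) (s : ZMod n) :
    (Qmat M s).map ⇑φ = Qmat (M.map ⇑φ) s := by
  ext a t
  simp [Qmat, Matrix.map_apply]

lemma Cmat_map (φ : R →+* S) (M : Matrix (Fin (k+1)) (ZMod n) R) (c : ZMod n) :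
    (Cmat M c).map ⇑φ = Cmat (M.map ⇑φ) c := by
  ext i a
  simp only [Cmat, Cof, Matrix.map_apply, Matrix.of_apply, map_mul, map_pow, map_neg, map_one]
  rw [RingHom.map_det, RingHom.mapMatrix_apply]
  rfl

noncomputable def genericM (k n : ℕ) :
    Matrix (Fin (k+1)) (ZMod n) (MvPolynomial (Fin (k+1) × ZMod n) ℤ) :=
  Matrix.of fun a x => MvPolynomial.X (a, x)

lemma Qdet_generic_ne_zero (hn : k + 1 ≤ n) (c : ZMod n) :
    (Qmat (genericM k n) c).det ≠ 0 := by
  intro h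
  have hn0 : NeZero n := ⟨by omega⟩
  set v : Fin (k+1) × ZMod n → ℤ :=
    fun p => if p.2 = c + ((p.1 : ℕ) : ZMod n) then (1 : ℤ) else 0 with hv
  have h2 := congrArg (MvPolynomial.eval v) h
  rw [map_zero, RingHom.map_det, RingHom.mapMatrix_apply] at h2
  have hmat : (Qmat (genericM k n) c).map ⇑(MvPolynomial.eval v)
      = (1 : Matrix (Fin (k+1)) (Fin (k+1)) ℤ) := by
    ext a t
    simp only [Qmat, genericM, Matrix.map_apply, Matrix.of_apply, MvPolynomial.eval_X,
      Matrix.one_apply, hv]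
    by_cases hat : a = t
    · rw [if_pos (by rw [hat]), if_pos hat]
    · rw [if_neg, if_neg hat]
      intro hcc
      apply hat
      have h3 : ((t : ℕ) : ZMod n) = ((a : ℕ) : ZMod n) := by
        have := add_left_cancel hcc
        exact this
      have h4 := congrArg ZMod.val h3
      rw [ZMod.val_natCast_of_lt (by omega), ZMod.val_natCast_of_lt (by omega)] at h4
      exact (Fin.ext h4).symm
  rw [hmat, Matrix.det_one] at h2
  exact one_ne_zero h2

lemma detCmat_eq (hn : k + 1 ≤ n) (M : Matrix (Fin (k+1)) (ZMod n) R) (c : ZMod n) :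
    (Cmat M c).det = ∏ l ∈ Finset.range k, (Qmat M (c + (l : ZMod n))).det := by
  have hgen : (Cmat (genericM k n) c).det
      = ∏ l ∈ Finset.range k, (Qmat (genericM k n) (c + (l : ZMod n))).det :=
    mul_left_cancel₀ (Qdet_generic_ne_zero hn c) (detCmat_mul (genericM k n) c)
  set φ : MvPolynomial (Fin (k+1) × ZMod n) ℤ →+* R :=
    MvPolynomial.eval₂Hom (Int.castRingHom R) (fun p => M p.1 p.2) with hφ
  have hMmap : (genericM k n).map ⇑φ = M := by
    ext a x
    simp [genericM, hφ, Matrix.map_apply]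
  calc (Cmat M c).det = ((Cmat (genericM k n) c).map ⇑φ).det := by
        rw [Cmat_map φ, hMmap]
    _ = φ (Cmat (genericM k n) c).det := by
        rw [RingHom.map_det, RingHom.mapMatrix_apply]
    _ = φ (∏ l ∈ Finset.range k, (Qmat (genericM k n) (c + (l : ZMod n))).det) := by rw [hgen]
    _ = ∏ l ∈ Finset.range k, φ ((Qmat (genericM k n) (c + (l : ZMod n))).det) := by
        rw [map_prod]
    _ = ∏ l ∈ Finset.range k, (Qmat M (c + (l : ZMod n))).det := by
        apply Finset.prod_congr rfl
        intro l _
        rw [RingHom.map_det, RingHom.mapMatrix_apply, Qmat_map, hMmap]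

theorem detE_eq (hn : k + 1 ≤ n) (M : Matrix (Fin (k+1)) (ZMod n) R) (c y : ZMod n) :
    (Matrix.of fun i j : Fin (k+1) => (Dmat M c (i : ℕ) (y + ((j : ℕ) : ZMod n))).det).det
    = (∏ l ∈ Finset.range k, (Qmat M (c + (l : ZMod n))).det) * (Qmat M y).det := by
  have hE : (Matrix.of fun i j : Fin (k+1) => (Dmat M c (i : ℕ) (y + ((j : ℕ) : ZMod n))).det)
      = Cmat M c * Qmat M y := by
    ext i j
    rw [Matrix.mul_apply, Matrix.of_apply, Dmat_det_eq_sum]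
    apply Finset.sum_congr rfl
    intro a _
    simp only [Cmat, Qmat, Matrix.of_apply]
    ring
  rw [hE, Matrix.det_mul, detCmat_eq hn]

end Transfer

end PartB

section Part3

variable {n : ℕ}

-- membership of 0 in a cyclic segment
lemma zero_mem_cSeg_iff [NeZero n] {s : ZMod n} {ℓ : ℕ} (hℓ : ℓ ≤ n) :
    (0 : ZMod n) ∈ cSeg n s ℓ ↔ ((0 : ZMod n) - s).val < ℓ := by
  simp only [cSeg, Finset.mem_image, Finset.mem_range]
  constructor
  · rintro ⟨t, ht, hst⟩
    have h1 : (t : ZMod n) = 0 - s := by rw [← hst]; ring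
    have h2 := congrArg ZMod.val h1
    rw [ZMod.val_natCast_of_lt (by omega)] at h2
    omega
  · intro h
    refine ⟨((0 : ZMod n) - s).val, h, ?_⟩
    rw [ZMod.natCast_rightInverse]
    ring

lemma mem_cSeg_iff [NeZero n] {s x : ZMod n} {ℓ : ℕ} (hℓ : ℓ ≤ n) :
    x ∈ cSeg n s ℓ ↔ (x - s).val < ℓ := by
  simp only [cSeg, Finset.mem_image, Finset.mem_range]
  constructor
  · rintro ⟨t, ht, hst⟩
    have h1 : (t : ZMod n) = x - s := by rw [← hst]; ring
    have h2 := congrArg ZMod.val h1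
    rw [ZMod.val_natCast_of_lt (by omega)] at h2
    omega
  · intro h
    refine ⟨(x - s).val, h, ?_⟩
    rw [ZMod.natCast_rightInverse]
    ring

lemma cSeg_card [NeZero n] (s : ZMod n) {ℓ : ℕ} (hℓ : ℓ ≤ n) : (cSeg n s ℓ).card = ℓ := by
  rw [cSeg, Finset.card_image_of_injOn, Finset.card_range]
  intro t ht t' ht' h
  simp only [Finset.coe_range, Set.mem_Iio] at ht ht'
  have h2 := congrArg ZMod.val (add_left_cancel h)
  rwa [ZMod.val_natCast_of_lt (by omega), ZMod.val_natCast_of_lt (by omega)] at h2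

lemma cSeg_image_shift (s : ZMod n) (ℓ : ℕ) :
    (cSeg n s ℓ).image (· + 1) = cSeg n (s + 1) ℓ := by
  rw [cSeg, cSeg, Finset.image_image]
  apply Finset.image_congr
  intro t _
  simp only [Function.comp_apply]
  ring

lemma pluck_zero_of_card_ne {R : Type*} [CommRing R] {k : ℕ}
    (M : Matrix (Fin k) (ZMod n) R) {I : Finset (ZMod n)} (h : I.card ≠ k) :
    pluck M I = 0 := by
  rw [pluck, dif_neg]
  tauto

-- the sorted enumeration of a k-subset
noncomputable def sEnum (I : Finset (ZMod n)) {k : ℕ} (hc : (I.image (rep n)).card = k)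
    (j : Fin k) : ZMod n :=
  (((I.image (rep n)).orderIsoOfFin hc j : ℕ) : ZMod n)

lemma rep_card [NeZero n] (I : Finset (ZMod n)) : (I.image (rep n)).card = I.card :=
  Finset.card_image_of_injective _ rep_injective

lemma rep_sEnum [NeZero n] (I : Finset (ZMod n)) {k : ℕ} (hc : (I.image (rep n)).card = k)
    (j : Fin k) : rep n (sEnum I hc j) = (I.image (rep n)).orderEmbOfFin hc j := by
  rw [sEnum, Finset.coe_orderIsoOfFin_apply]
  have hmem : (I.image (rep n)).orderEmbOfFin hc j ∈ I.image (rep n) :=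
    Finset.orderEmbOfFin_mem _ hc j
  obtain ⟨x, _, hx⟩ := Finset.mem_image.mp hmem
  rw [← hx, cast_rep]

lemma sEnum_strictMono [NeZero n] (I : Finset (ZMod n)) {k : ℕ}
    (hc : (I.image (rep n)).card = k) : StrictMono fun j => rep n (sEnum I hc j) := by
  intro a b hab
  show rep n (sEnum I hc a) < rep n (sEnum I hc b)
  rw [rep_sEnum, rep_sEnum]
  exact ((I.image (rep n)).orderEmbOfFin hc).strictMono hab

lemma sEnum_mem [NeZero n] (I : Finset (ZMod n)) {k : ℕ} (hc : (I.image (rep n)).card = k)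
    (j : Fin k) : sEnum I hc j ∈ I := by
  have hmem : (I.image (rep n)).orderEmbOfFin hc j ∈ I.image (rep n) :=
    Finset.orderEmbOfFin_mem _ hc j
  obtain ⟨x, hxI, hx⟩ := Finset.mem_image.mp hmem
  have : sEnum I hc j = x := by
    apply rep_injective
    rw [rep_sEnum, ← hx]
  rwa [this]

lemma sEnum_image [NeZero n] (I : Finset (ZMod n)) {k : ℕ}
    (hc : (I.image (rep n)).card = k) (hck : I.card = k) :
    Finset.image (sEnum I hc) Finset.univ = I := by
  apply Finset.eq_of_subset_of_card_le
  · intro x hx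
    obtain ⟨j, _, rfl⟩ := Finset.mem_image.mp hx
    exact sEnum_mem I hc j
  · have hinj : Function.Injective (sEnum I hc) := by
      intro a b hab
      exact (sEnum_strictMono I hc).injective
        (by rw [show sEnum I hc a = sEnum I hc b from hab])
    rw [hck, Finset.card_image_of_injective _ hinj, Finset.card_univ, Fintype.card_fin]

lemma pluck_eq_det_sEnum [NeZero n] {R : Type*} [CommRing R] {k : ℕ}
    (M : Matrix (Fin k) (ZMod n) R) (I : Finset (ZMod n))
    (hc : (I.image (rep n)).card = k) (hck : I.card = k) :
    pluck M I = Matrix.det (Matrix.of fun i j => M i (sEnum I hc j)) := by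
  have h := pluck_eq_det_of_strictMono M (sEnum I hc) (sEnum_strictMono I hc)
  rwa [sEnum_image I hc hck] at h

end Part3

section Part4

variable {n : ℕ}

lemma neg_one_pow_mul_self {R : Type*} [Monoid R] [HasDistribNeg R] (K : ℕ) :
    (-1 : R) ^ (K * K) = (-1 : R) ^ K := by
  rcases Nat.even_or_odd K with he | ho
  · simp [pow_mul, he.neg_one_pow]
  · simp [pow_mul, ho.neg_one_pow]

lemma rep_add_one [NeZero n] {x : ZMod n} (hx : x ≠ 0) (hn : 2 ≤ n) :
    rep n (x + 1) = rep n x + 1 := by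
  have hval : x.val ≠ 0 := fun h => hx ((ZMod.val_eq_zero x).mp h)
  have hlt : x.val < n := ZMod.val_lt x
  have hadd : (x + 1).val = (x.val + 1) % n := by
    rw [ZMod.val_add, ZMod.val_one_eq_one_mod, Nat.mod_eq_of_lt (show (1:ℕ) < n by omega)]
  unfold rep
  rcases Nat.lt_or_ge (x.val + 1) n with h | h
  · rw [Nat.mod_eq_of_lt h] at hadd
    rw [hadd, if_neg (by omega), if_neg hval]
  · have h1 : (x + 1).val = 0 := by
      rw [hadd, show x.val + 1 = n by omega, Nat.mod_self]
    rw [if_pos h1, if_neg hval]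
    omega

lemma sEnum_last_zero [NeZero n] {K : ℕ} (I : Finset (ZMod n))
    (hc : (I.image (rep n)).card = K + 1) (h0 : (0 : ZMod n) ∈ I) :
    sEnum I hc (Fin.last K) = 0 := by
  have hck : I.card = K + 1 := by rw [← rep_card I, hc]
  obtain ⟨j0, _, hj0⟩ := Finset.mem_image.mp (by rw [sEnum_image I hc hck]; exact h0 :
    (0 : ZMod n) ∈ Finset.image (sEnum I hc) Finset.univ)
  by_cases hlast : j0 = Fin.last K
  · rwa [← hlast]
  · exfalso
    have hlt : j0 < Fin.last K := lt_of_le_of_ne (Fin.le_last j0) hlast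
    have := sEnum_strictMono I hc hlt
    simp only at this
    rw [hj0] at this
    have h2 : rep n (0 : ZMod n) = n := by unfold rep; simp
    have := rep_le (sEnum I hc (Fin.last K))
    omega

lemma pluck_shift {R : Type*} [CommRing R] {K : ℕ} (hn : 2 * (K + 1) ≤ n)
    (M : Matrix (Fin (K + 1)) (ZMod n) R) (I : Finset (ZMod n)) :
    pluck M (I.image (· + 1)) =
      (if (0 : ZMod n) ∈ I then (-1 : R) ^ K else 1) *
        pluck (Matrix.of fun a x => M a (x + 1)) I := by
  have hn0 : NeZero n := ⟨by omega⟩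
  have hn2 : 2 ≤ n := by omega
  by_cases hck : I.card = K + 1
  · have hc : (I.image (rep n)).card = K + 1 := by rw [rep_card I, hck]
    have hrepM' : pluck (Matrix.of fun a x => M a (x + 1)) I
        = Matrix.det (Matrix.of fun i j => M i (sEnum I hc j + 1)) :=
      pluck_eq_det_sEnum _ I hc hck
    have himg : I.image (· + 1) =
        Finset.image (fun j => sEnum I hc j + 1) Finset.univ := by
      conv_lhs => rw [← sEnum_image I hc hck]
      rw [Finset.image_image]
      rfl
    by_cases h0 : (0 : ZMod n) ∈ I
    · -- rotated case
      have hne : ∀ j : Fin (K + 1), j ≠ Fin.last K → sEnum I hc j ≠ 0 := by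
        intro j hj hzero
        apply hj
        have : sEnum I hc j = sEnum I hc (Fin.last K) := by
          rw [hzero, sEnum_last_zero I hc h0]
        exact (sEnum_strictMono I hc).injective
          (by rw [show sEnum I hc j = sEnum I hc (Fin.last K) from this])
      have hmono : StrictMono fun j : Fin (K+1) =>
          rep n ((fun j => sEnum I hc j + 1) (((finRotate (K+1)) ^ K) j)) := by
        intro a b hab
        simp only
        have hva := rotpow_k_apply (k := K) a
        have hvb := rotpow_k_apply (k := K) b
        have hab' : (a : ℕ) < (b : ℕ) := hab
        have hbpos : (b : ℕ) ≠ 0 := by omega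
        rw [if_neg hbpos] at hvb
        have hblt : ((((finRotate (K+1)) ^ K) b : Fin (K+1)) : ℕ) = (b : ℕ) - 1 := hvb
        -- value at b : sEnum at index b-1, which is not last since b-1 < K... b-1 ≤ K-1
        have hbne : (((finRotate (K+1)) ^ K) b) ≠ Fin.last K := by
          intro h
          have := congrArg Fin.val h
          rw [hblt, Fin.val_last] at this
          have := b.isLt
          omega
        rw [rep_add_one (hne _ hbne) hn2]
        rcases Nat.eq_zero_or_pos (a : ℕ) with ha0 | hapos
        · rw [if_pos ha0] at hva
          have halast : (((finRotate (K+1)) ^ K) a) = Fin.last K := Fin.ext (by rw [hva]; rfl)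
          rw [halast, sEnum_last_zero I hc h0]
          have h2 : rep n ((0 : ZMod n) + 1) = 1 := by
            rw [zero_add]
            have : ((1 : ℕ) : ZMod n) = (1 : ZMod n) := by push_cast; rfl
            rw [← this, rep_natCast le_rfl (by omega)]
          rw [h2]
          have := rep_pos (sEnum I hc (((finRotate (K+1)) ^ K) b))
          omega
        · rw [if_neg (by omega)] at hva
          have hane : (((finRotate (K+1)) ^ K) a) ≠ Fin.last K := by
            intro h
            have := congrArg Fin.val h
            rw [hva, Fin.val_last] at this
            have := a.isLt
            omega
          rw [rep_add_one (hne _ hane) hn2]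
          have : rep n (sEnum I hc (((finRotate (K+1)) ^ K) a))
              < rep n (sEnum I hc (((finRotate (K+1)) ^ K) b)) := by
            apply sEnum_strictMono I hc
            rw [Fin.lt_iff_val_lt_val, hva, hblt]
            omega
          omega
      rw [himg, pluck_eq_det_rot M _ K hmono, if_pos h0, hrepM']
      congr 1
      exact neg_one_pow_mul_self K
    · -- no-wrap case
      have hmono : StrictMono fun j : Fin (K+1) => rep n (sEnum I hc j + 1) := by
        intro a b hab
        simp only
        have hna : sEnum I hc a ≠ 0 := by
          intro h
          exact h0 (by rw [← h]; exact sEnum_mem I hc a)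
        have hnb : sEnum I hc b ≠ 0 := by
          intro h
          exact h0 (by rw [← h]; exact sEnum_mem I hc b)
        rw [rep_add_one hna hn2, rep_add_one hnb hn2]
        have := sEnum_strictMono I hc hab
        simp only at this
        omega
      rw [himg, pluck_eq_det_of_strictMono M _ hmono, if_neg h0, one_mul, hrepM']
  · rw [pluck_zero_of_card_ne M (I := I.image (· + 1)), pluck_zero_of_card_ne _ hck, mul_zero]
    rw [Finset.card_image_of_injective _ (add_left_injective 1)]
    exact hck

end Part4

section Part5

variable {n : ℕ}

lemma neg_one_pow_congr' {R : Type*} [Monoid R] [HasDistribNeg R] {a b : ℕ}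
    (h : a % 2 = b % 2) : (-1 : R) ^ a = (-1 : R) ^ b := by
  rw [← Nat.div_add_mod a 2, ← Nat.div_add_mod b 2, pow_add, pow_add, pow_mul, pow_mul,
    neg_one_sq, one_pow, one_pow, one_mul, one_mul, h]

lemma sum_indicator (L d N : ℕ) :
    (∑ t ∈ Finset.range L, if N ≤ d + t then (1 : ℕ) else 0) = L - min (N - d) L := by
  induction L with
  | zero => simp
  | succ L ih =>
    rw [Finset.sum_range_succ, ih]
    split_ifs <;> omega

lemma rep_one_add [NeZero n] {c : ℕ} (hc : c < n) :
    rep n ((1 : ZMod n) + ((c : ℕ) : ZMod n)) = c + 1 := by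
  have h : (1 : ZMod n) + ((c : ℕ) : ZMod n) = (((c + 1 : ℕ)) : ZMod n) := by
    push_cast
    ring
  rw [h, rep_natCast (by omega) (by omega)]

lemma image_seg (s : ZMod n) (ℓ : ℕ) :
    Finset.image (fun t : Fin ℓ => s + ((t : ℕ) : ZMod n)) Finset.univ = cSeg n s ℓ := by
  ext y
  simp only [Finset.mem_image, Finset.mem_univ, true_and, cSeg, Finset.mem_range]
  constructor
  · rintro ⟨t, rfl⟩
    exact ⟨t, t.isLt, rfl⟩
  · rintro ⟨t, ht, rfl⟩
    exact ⟨⟨t, ht⟩, rfl⟩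

lemma image_winx {K : ℕ} (c x : ZMod n) :
    Finset.image (fun t : Fin (K+1) => if (t : ℕ) = K then x else c + ((t : ℕ) : ZMod n))
      Finset.univ = cSeg n c K ∪ {x} := by
  ext y
  simp only [Finset.mem_image, Finset.mem_univ, true_and, Finset.mem_union,
    Finset.mem_singleton, cSeg, Finset.mem_range]
  constructor
  · rintro ⟨t, rfl⟩
    by_cases ht : (t : ℕ) = K
    · rw [if_pos ht]
      exact Or.inr rfl
    · rw [if_neg ht]
      exact Or.inl ⟨t, by have := t.isLt; omega, rfl⟩
  · rintro (⟨t, htK, rfl⟩ | rfl)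
    · refine ⟨⟨t, by omega⟩, ?_⟩
      rw [if_neg (by simpa using by omega : ¬ ((⟨t, by omega⟩ : Fin (K+1)) : ℕ) = K)]
    · exact ⟨⟨K, by omega⟩, by rw [if_pos rfl]⟩

variable {R : Type*} [CommRing R] {K : ℕ}

lemma base_entry (hK : 1 ≤ K) (hn : 2 * (K + 1) ≤ n)
    (M : Matrix (Fin (K+1)) (ZMod n) R) {d : ℕ} (hd1 : K ≤ d) (hd2 : d ≤ n - 1)
    (i j : Fin (K+1)) :
    pluck M (cSeg n ((1 : ZMod n) + ((i : ℕ) : ZMod n)) K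
        ∪ {(1 : ZMod n) + (d : ZMod n) + ((j : ℕ) : ZMod n)}) =
    (if n ≤ d + (j : ℕ) then (-1 : R) ^ K else 1) *
      (Dmat M 1 (i : ℕ) ((1 : ZMod n) + (d : ZMod n) + ((j : ℕ) : ZMod n))).det := by
  have hn0 : NeZero n := ⟨by omega⟩
  set o : ℕ := (d + (j : ℕ)) % n with ho_def
  have hdj : d + (j : ℕ) < 2 * n := by have := j.isLt; omega
  have holt : o < n := Nat.mod_lt _ (by omega)
  have ho : (1 : ZMod n) + (d : ZMod n) + ((j : ℕ) : ZMod n)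
      = (1 : ZMod n) + ((o : ℕ) : ZMod n) := by
    rw [ho_def, ZMod.natCast_mod]
    push_cast
    ring
  rw [ho]
  set f : Fin (K+1) → ZMod n := fun t =>
    if (t : ℕ) = K then (1 : ZMod n) + ((o : ℕ) : ZMod n)
    else (1 : ZMod n) + ((i : ℕ) : ZMod n) + ((t : ℕ) : ZMod n)
    with hf
  have himg : Finset.image f Finset.univ
      = cSeg n ((1 : ZMod n) + ((i : ℕ) : ZMod n)) K
        ∪ {(1 : ZMod n) + ((o : ℕ) : ZMod n)} := image_winx _ _
  have hrepwin : ∀ t : Fin (K+1), (t : ℕ) ≠ K → rep n (f t) = (i : ℕ) + (t : ℕ) + 1 := by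
    intro t ht
    have h1 : f t = (1 : ZMod n) + (((i : ℕ) + (t : ℕ) : ℕ) : ZMod n) := by
      rw [hf]
      simp only [if_neg ht]
      push_cast
      ring
    rw [h1, rep_one_add (by have := i.isLt; have := t.isLt; omega)]
  have hrepx : ∀ t : Fin (K+1), (t : ℕ) = K → rep n (f t) = o + 1 := by
    intro t ht
    have h1 : f t = (1 : ZMod n) + ((o : ℕ) : ZMod n) := by
      rw [hf]; simp only [if_pos ht]
    rw [h1, rep_one_add holt]
  have hdet : Matrix.det (Matrix.of fun a t => M a (f t))
      = (Dmat M 1 (i : ℕ) ((1 : ZMod n) + ((o : ℕ) : ZMod n))).det := by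
    apply congrArg Matrix.det
    ext a t
    rw [Dmat]
    simp only [Matrix.of_apply, hf]
    split_ifs with ht
    · rfl
    · rfl
  by_cases hw : n ≤ d + (j : ℕ)
  · have hoeq : o = d + (j : ℕ) - n := by
      rw [ho_def, Nat.mod_eq_sub_mod hw, Nat.mod_eq_of_lt (by omega)]
    have hoK : o ≤ K - 1 := by have := j.isLt; omega
    by_cases hsup : o < (i : ℕ)
    · have hmono : StrictMono fun t : Fin (K+1) =>
          rep n (f (((finRotate (K+1)) ^ K) t)) := by
        intro a b hab
        simp only
        have hva := rotpow_k_apply (k := K) a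
        have hvb := rotpow_k_apply (k := K) b
        have hab' : (a : ℕ) < (b : ℕ) := hab
        rw [if_neg (by omega)] at hvb
        have hbne : ((((finRotate (K+1)) ^ K) b) : ℕ) ≠ K := by
          have := b.isLt; omega
        rw [hrepwin _ hbne, hvb]
        rcases Nat.eq_zero_or_pos (a : ℕ) with ha0 | hapos
        · rw [if_pos ha0] at hva
          rw [hrepx _ hva]
          omega
        · rw [if_neg (by omega)] at hva
          have hane : ((((finRotate (K+1)) ^ K) a) : ℕ) ≠ K := by
            have := a.isLt; omega
          rw [hrepwin _ hane, hva]
          omega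
      rw [← himg, pluck_eq_det_rot M f K hmono, hdet, if_pos hw, neg_one_pow_mul_self]
    · have hio : (i : ℕ) ≤ o := le_of_not_gt hsup
      have hxmem : (1 : ZMod n) + ((o : ℕ) : ZMod n)
          ∈ cSeg n ((1 : ZMod n) + ((i : ℕ) : ZMod n)) K := by
        rw [mem_cSeg_iff (by omega)]
        have hsub : (1 : ZMod n) + ((o : ℕ) : ZMod n) - ((1 : ZMod n) + ((i : ℕ) : ZMod n))
            = (((o - (i : ℕ) : ℕ)) : ZMod n) := by
          rw [Nat.cast_sub hio]
          ring
        rw [hsub, ZMod.val_natCast_of_lt (by omega)]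
        have := i.isLt
        omega
      have hset : cSeg n ((1 : ZMod n) + ((i : ℕ) : ZMod n)) K
            ∪ {(1 : ZMod n) + ((o : ℕ) : ZMod n)}
          = cSeg n ((1 : ZMod n) + ((i : ℕ) : ZMod n)) K :=
        Finset.union_eq_left.mpr (Finset.singleton_subset_iff.mpr hxmem)
      rw [hset, pluck_zero_of_card_ne M (by rw [cSeg_card _ (by omega)]; omega),
        Dmat_det_zero M 1 (i : ℕ) o hio (by omega), mul_zero]
  · have hoeq : o = d + (j : ℕ) := by
      rw [ho_def, Nat.mod_eq_of_lt (by omega)]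
    by_cases hsup : o < (i : ℕ) + K
    · have hio : (i : ℕ) ≤ o := by have := i.isLt; omega
      have hxmem : (1 : ZMod n) + ((o : ℕ) : ZMod n)
          ∈ cSeg n ((1 : ZMod n) + ((i : ℕ) : ZMod n)) K := by
        rw [mem_cSeg_iff (by omega)]
        have hsub : (1 : ZMod n) + ((o : ℕ) : ZMod n) - ((1 : ZMod n) + ((i : ℕ) : ZMod n))
            = (((o - (i : ℕ) : ℕ)) : ZMod n) := by
          rw [Nat.cast_sub hio]
          ring
        rw [hsub, ZMod.val_natCast_of_lt (by omega)]
        omega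
      have hset : cSeg n ((1 : ZMod n) + ((i : ℕ) : ZMod n)) K
            ∪ {(1 : ZMod n) + ((o : ℕ) : ZMod n)}
          = cSeg n ((1 : ZMod n) + ((i : ℕ) : ZMod n)) K :=
        Finset.union_eq_left.mpr (Finset.singleton_subset_iff.mpr hxmem)
      rw [hset, pluck_zero_of_card_ne M (by rw [cSeg_card _ (by omega)]; omega),
        Dmat_det_zero M 1 (i : ℕ) o hio (by omega), mul_zero]
    · have hmono : StrictMono fun t : Fin (K+1) => rep n (f t) := by
        intro a b hab
        simp only
        have hab' : (a : ℕ) < (b : ℕ) := hab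
        have hane : (a : ℕ) ≠ K := by have := b.isLt; omega
        rw [hrepwin a hane]
        by_cases hbK : (b : ℕ) = K
        · rw [hrepx _ hbK]
          omega
        · rw [hrepwin b hbK]
          omega
      rw [← himg, pluck_eq_det_of_strictMono M f hmono, hdet, if_neg hw, one_mul]

end Part5

section Part6

variable {n : ℕ} {R : Type*} [CommRing R] {K : ℕ}

theorem base_case (hK : 1 ≤ K) (hn : 2 * (K + 1) ≤ n) (M : Matrix (Fin (K+1)) (ZMod n) R)
    {d : ℕ} (hd1 : K ≤ d) (hd2 : d ≤ n - 1) :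
    Matrix.det (Matrix.of fun i j : Fin (K+1) =>
      pluck M (cSeg n ((1 : ZMod n) + ((i : ℕ) : ZMod n)) K
        ∪ {(1 : ZMod n) + (d : ZMod n) + ((j : ℕ) : ZMod n)})) =
    (∏ l ∈ Finset.range K, pluck M (cSeg n ((1 : ZMod n) + ((l : ℕ) : ZMod n)) (K+1))) *
      pluck M (cSeg n ((1 : ZMod n) + (d : ZMod n)) (K+1)) := by
  have hn0 : NeZero n := ⟨by omega⟩
  have hmat : (Matrix.of fun i j : Fin (K+1) =>
      pluck M (cSeg n ((1 : ZMod n) + ((i : ℕ) : ZMod n)) K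
        ∪ {(1 : ZMod n) + (d : ZMod n) + ((j : ℕ) : ZMod n)}))
      = Matrix.of (fun i j : Fin (K+1) =>
          (if n ≤ d + (j : ℕ) then (-1 : R) ^ K else 1) *
          (Matrix.of fun i' j' : Fin (K+1) =>
            (Dmat M 1 (i' : ℕ)
              (((1 : ZMod n) + (d : ZMod n)) + ((j' : ℕ) : ZMod n))).det) i j) := by
    ext i j
    simp only [Matrix.of_apply]
    exact base_entry hK hn M hd1 hd2 i j
  rw [hmat, Matrix.det_mul_row, detE_eq (by omega) M 1 ((1 : ZMod n) + (d : ZMod n))]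
  have hQl : ∀ l ∈ Finset.range K,
      pluck M (cSeg n ((1 : ZMod n) + ((l : ℕ) : ZMod n)) (K+1))
        = (Qmat M (1 + ((l : ℕ) : ZMod n))).det := by
    intro l hl
    rw [Finset.mem_range] at hl
    have hmono : StrictMono fun t : Fin (K+1) =>
        rep n (((1 : ZMod n) + ((l : ℕ) : ZMod n)) + ((t : ℕ) : ZMod n)) := by
      intro a b hab
      have hab' : (a : ℕ) < (b : ℕ) := hab
      simp only
      have h1 : ∀ t : Fin (K+1), ((1 : ZMod n) + ((l : ℕ) : ZMod n)) + ((t : ℕ) : ZMod n)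
          = (1 : ZMod n) + (((l + (t : ℕ) : ℕ)) : ZMod n) := by
        intro t
        push_cast
        ring
      rw [h1 a, h1 b, rep_one_add (by have := a.isLt; omega),
        rep_one_add (by have := b.isLt; omega)]
      omega
    have h := pluck_eq_det_of_strictMono M _ hmono
    rw [image_seg] at h
    rw [h]
    rfl
  rw [Finset.prod_congr rfl hQl]
  by_cases hwrap : d + K < n
  · have hv : ∀ j : Fin (K+1), (if n ≤ d + (j : ℕ) then (-1 : R) ^ K else 1) = 1 :=
      fun j => if_neg (by have := j.isLt; omega)
    rw [Finset.prod_congr rfl (fun j _ => hv j), Finset.prod_const_one, one_mul]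
    congr 1
    have hmono : StrictMono fun t : Fin (K+1) =>
        rep n (((1 : ZMod n) + (d : ZMod n)) + ((t : ℕ) : ZMod n)) := by
      intro a b hab
      have hab' : (a : ℕ) < (b : ℕ) := hab
      simp only
      have h1 : ∀ t : Fin (K+1), ((1 : ZMod n) + (d : ZMod n)) + ((t : ℕ) : ZMod n)
          = (1 : ZMod n) + (((d + (t : ℕ) : ℕ)) : ZMod n) := by
        intro t
        push_cast
        ring
      rw [h1 a, h1 b, rep_one_add (by have := a.isLt; omega),
        rep_one_add (by have := b.isLt; omega)]
      omega
    have h := pluck_eq_det_of_strictMono M _ hmono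
    rw [image_seg] at h
    rw [h]
    rfl
  · -- wrapped case
    have hval : ∀ t : Fin (K+1), ((((finRotate (K+1)) ^ (n - d)) t : Fin (K+1)) : ℕ)
        = if (t : ℕ) + (n - d) ≤ K then (t : ℕ) + (n - d) else (t : ℕ) + (n - d) - (K+1) := by
      intro t
      rw [rotpow_apply, Fin.val_add, Fin.val_natCast,
        Nat.mod_eq_of_lt (show n - d < K + 1 by omega)]
      split_ifs with h
      · exact Nat.mod_eq_of_lt (by omega)
      · rw [Nat.mod_eq_sub_mod (by omega : K + 1 ≤ (t : ℕ) + (n - d))]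
        exact Nat.mod_eq_of_lt (by have := t.isLt; omega)
    have hrep : ∀ u : Fin (K+1), rep n (((1 : ZMod n) + (d : ZMod n)) + ((u : ℕ) : ZMod n))
        = if d + (u : ℕ) < n then d + (u : ℕ) + 1 else d + (u : ℕ) - n + 1 := by
      intro u
      have h1 : ((1 : ZMod n) + (d : ZMod n)) + ((u : ℕ) : ZMod n)
          = 1 + ((((d + (u : ℕ)) % n : ℕ)) : ZMod n) := by
        rw [ZMod.natCast_mod]
        push_cast
        ring
      rw [h1, rep_one_add (Nat.mod_lt _ (by omega))]
      split_ifs with h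
      · rw [Nat.mod_eq_of_lt h]
      · rw [Nat.mod_eq_sub_mod (by omega), Nat.mod_eq_of_lt (by have := u.isLt; omega)]
    have hmono : StrictMono fun t : Fin (K+1) =>
        rep n ((fun t' : Fin (K+1) => ((1 : ZMod n) + (d : ZMod n)) + ((t' : ℕ) : ZMod n))
          (((finRotate (K+1)) ^ (n - d)) t)) := by
      intro a b hab
      have hab' : (a : ℕ) < (b : ℕ) := hab
      simp only
      have hva := hval a
      have hvb := hval b
      have hia := a.isLt
      have hib := b.isLt
      have hra := hrep (((finRotate (K+1)) ^ (n - d)) a)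
      have hrb := hrep (((finRotate (K+1)) ^ (n - d)) b)
      rw [hra, hrb]
      split_ifs at hva hvb ⊢ <;> omega
    have hplm := pluck_eq_det_rot M
      (fun t : Fin (K+1) => ((1 : ZMod n) + (d : ZMod n)) + ((t : ℕ) : ZMod n)) (n - d) hmono
    rw [image_seg] at hplm
    rw [hplm]
    have hprod : (∏ j : Fin (K+1), (if n ≤ d + (j : ℕ) then (-1 : R) ^ K else 1))
        = (-1 : R) ^ (K * (n - d)) := by
      have h1 : ∀ j : Fin (K+1), (if n ≤ d + (j : ℕ) then (-1 : R) ^ K else 1)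
          = ((-1 : R) ^ K) ^ (if n ≤ d + (j : ℕ) then 1 else 0) := by
        intro j
        split_ifs <;> simp
      rw [Finset.prod_congr rfl (fun j _ => h1 j), Finset.prod_pow_eq_pow_sum]
      have h2 : (∑ j : Fin (K+1), (if n ≤ d + (j : ℕ) then 1 else 0))
          = ∑ t ∈ Finset.range (K+1), (if n ≤ d + t then 1 else 0) :=
        Fin.sum_univ_eq_sum_range (fun t => if n ≤ d + t then 1 else 0) (K+1)
      rw [h2, sum_indicator, ← pow_mul]
      apply neg_one_pow_congr'
      have h3 : ((K+1) - min (n - d) (K+1)) + (n - d) = K + 1 := by omega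
      have h4 : K * ((K+1) - min (n - d) (K+1)) + K * (n - d) = K * (K+1) := by
        rw [← Nat.mul_add, h3]
      have h5 : Even (K * (K+1)) := Nat.even_mul_succ_self K
      obtain ⟨c, hc⟩ := h5
      omega
    rw [hprod]
    show ((-1 : R) ^ (K * (n - d))) * ((∏ l ∈ Finset.range K,
        (Qmat M (1 + ((l : ℕ) : ZMod n))).det) * (Qmat M (1 + (d : ZMod n))).det)
      = (∏ l ∈ Finset.range K, (Qmat M (1 + ((l : ℕ) : ZMod n))).det) *
        ((-1 : R) ^ (K * (n - d)) * (Qmat M (1 + (d : ZMod n))).det)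
    ring

end Part6

section Part7

variable {n : ℕ}

lemma val_sub_nat [NeZero n] {ζ t : ℕ} (hζ : ζ < n) (ht : t < n) :
    (((ζ : ℕ) : ZMod n) - ((t : ℕ) : ZMod n)).val = if t ≤ ζ then ζ - t else ζ + n - t := by
  have h1 : ((ζ : ℕ) : ZMod n) - ((t : ℕ) : ZMod n) = (((ζ + n - t : ℕ)) : ZMod n) := by
    rw [Nat.cast_sub (by omega : t ≤ ζ + n)]
    push_cast
    rw [ZMod.natCast_self]
    ring
  rw [h1, ZMod.val_natCast]
  split_ifs with h
  · rw [show ζ + n - t = (ζ - t) + n by omega, Nat.add_mod_right, Nat.mod_eq_of_lt (by omega)]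
  · exact Nat.mod_eq_of_lt (by omega)

lemma sum_ind_band (L a b : ℕ) :
    (∑ t ∈ Finset.range L, if a ≤ t ∧ t ≤ b then (1 : ℕ) else 0)
      = min L (b + 1) - min L a := by
  induction L with
  | zero => simp
  | succ L ih =>
    rw [Finset.sum_range_succ, ih]
    split_ifs <;> omega

-- the count identity for the induction step
lemma count_identity (K : ℕ) (hK : 1 ≤ K) (hn : 2 * (K + 1) ≤ n) {ζ : ℕ} (hζ : ζ < n) :
    (∑ t ∈ Finset.range (K + 1),
        if (if t ≤ ζ then ζ - t else ζ + n - t) < K then (1 : ℕ) else 0)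
      = ∑ l ∈ Finset.range K,
        if (if l ≤ ζ then ζ - l else ζ + n - l) < K + 1 then (1 : ℕ) else 0 := by
  have h1 : (∑ t ∈ Finset.range (K + 1),
      if (if t ≤ ζ then ζ - t else ζ + n - t) < K then (1 : ℕ) else 0)
      = ∑ t ∈ Finset.range (K + 1), if ζ + 1 - K ≤ t ∧ t ≤ ζ then (1 : ℕ) else 0 := by
    apply Finset.sum_congr rfl
    intro t ht
    rw [Finset.mem_range] at ht
    apply if_congr _ rfl rfl
    split_ifs <;> omega
  have h2 : (∑ l ∈ Finset.range K,
      if (if l ≤ ζ then ζ - l else ζ + n - l) < K + 1 then (1 : ℕ) else 0)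
      = ∑ l ∈ Finset.range K, if ζ - K ≤ l ∧ l ≤ ζ then (1 : ℕ) else 0 := by
    apply Finset.sum_congr rfl
    intro l hl
    rw [Finset.mem_range] at hl
    apply if_congr _ rfl rfl
    split_ifs <;> omega
  rw [h1, h2, sum_ind_band, sum_ind_band]
  omega

lemma hm_unpack {k : ℕ} (hk : 2 ≤ k) (hkn : 2 * k ≤ n) (r m : ZMod n)
    (hm : m ∈ cIcc n (r + (k : ZMod n) - 1) (r - 1)) :
    ∃ d : ℕ, k - 1 ≤ d ∧ d ≤ n - 1 ∧ m = r + (d : ZMod n) := by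
  have hn0 : NeZero n := ⟨by omega⟩
  rw [cIcc] at hm
  have hlen : ((r - 1 - (r + (k : ZMod n) - 1)).val) = n - k := by
    have h1 : r - 1 - (r + (k : ZMod n) - 1) = (((n - k : ℕ)) : ZMod n) := by
      rw [Nat.cast_sub (by omega : k ≤ n), ZMod.natCast_self]
      ring
    rw [h1, ZMod.val_natCast_of_lt (by omega)]
  rw [hlen] at hm
  rw [cSeg] at hm
  simp only [Finset.mem_image, Finset.mem_range] at hm
  obtain ⟨t, ht, hmt⟩ := hm
  refine ⟨k - 1 + t, by omega, by omega, ?_⟩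
  rw [← hmt]
  push_cast [Nat.cast_sub (by omega : 1 ≤ k)]
  ring

end Part7

section Part8

variable {n : ℕ}

theorem main_aux (K : ℕ) (hK : 1 ≤ K) (hn : 2 * (K + 1) ≤ n) (v : ℕ) :
    ∀ {R : Type*} [CommRing R] (M : Matrix (Fin (K+1)) (ZMod n) R) (d : ℕ),
      K ≤ d → d ≤ n - 1 →
      Matrix.det (Matrix.of fun i j : Fin (K+1) =>
        pluck M (cSeg n ((1 + ((v : ℕ) : ZMod n)) + ((i : ℕ) : ZMod n)) K
          ∪ {((1 + ((v : ℕ) : ZMod n)) + (d : ZMod n)) + ((j : ℕ) : ZMod n)})) =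
      (∏ l ∈ Finset.range K,
        pluck M (cSeg n ((1 + ((v : ℕ) : ZMod n)) + ((l : ℕ) : ZMod n)) (K+1))) *
        pluck M (cSeg n ((1 + ((v : ℕ) : ZMod n)) + (d : ZMod n)) (K+1)) := by
  have hn0 : NeZero n := ⟨by omega⟩
  induction v with
  | zero =>
    intro R _ M d hd1 hd2
    have h := base_case hK hn M hd1 hd2
    simpa using h
  | succ v ih =>
    intro R _ M d hd1 hd2
    have hcast : (1 : ZMod n) + (((v + 1 : ℕ)) : ZMod n)
        = (1 + ((v : ℕ) : ZMod n)) + 1 := by push_cast; ring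
    rw [hcast]
    set r' : ZMod n := 1 + ((v : ℕ) : ZMod n) with hr'
    set M' : Matrix (Fin (K+1)) (ZMod n) R := Matrix.of (fun a x => M a (x + 1)) with hM'
    set ζ : ℕ := ((0 : ZMod n) - r').val with hζdef
    have hζlt : ζ < n := ZMod.val_lt _
    have hzr : ((ζ : ℕ) : ZMod n) = 0 - r' := ZMod.natCast_rightInverse _
    set u : ℕ → R := fun t =>
      if (0 : ZMod n) ∈ cSeg n (r' + ((t : ℕ) : ZMod n)) K then (-1 : R) ^ K else 1 with hu
    set w : ℕ → R := fun t =>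
      if (r' + (d : ZMod n)) + ((t : ℕ) : ZMod n) = 0 then (-1 : R) ^ K else 1 with hw
    have hentry : ∀ i j : Fin (K+1),
        pluck M (cSeg n ((r' + 1) + ((i : ℕ) : ZMod n)) K
          ∪ {((r' + 1) + (d : ZMod n)) + ((j : ℕ) : ZMod n)})
        = u (i : ℕ) * (w (j : ℕ) *
            pluck M' (cSeg n (r' + ((i : ℕ) : ZMod n)) K
              ∪ {(r' + (d : ZMod n)) + ((j : ℕ) : ZMod n)})) := by
      intro i j
      have himg : cSeg n ((r' + 1) + ((i : ℕ) : ZMod n)) K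
            ∪ {((r' + 1) + (d : ZMod n)) + ((j : ℕ) : ZMod n)}
          = (cSeg n (r' + ((i : ℕ) : ZMod n)) K
            ∪ {(r' + (d : ZMod n)) + ((j : ℕ) : ZMod n)}).image (· + 1) := by
        rw [Finset.image_union, Finset.image_singleton, cSeg_image_shift]
        congr 2
        · ring
        · ring
      rw [himg, pluck_shift hn M]
      rw [← hM']
      by_cases h0s : (0 : ZMod n) ∈ cSeg n (r' + ((i : ℕ) : ZMod n)) K
      · by_cases h0x : (r' + (d : ZMod n)) + ((j : ℕ) : ZMod n) = 0
        · have hxin : (r' + (d : ZMod n)) + ((j : ℕ) : ZMod n)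
              ∈ cSeg n (r' + ((i : ℕ) : ZMod n)) K := by rw [h0x]; exact h0s
          have hSe : cSeg n (r' + ((i : ℕ) : ZMod n)) K
                ∪ {(r' + (d : ZMod n)) + ((j : ℕ) : ZMod n)}
              = cSeg n (r' + ((i : ℕ) : ZMod n)) K :=
            Finset.union_eq_left.mpr (Finset.singleton_subset_iff.mpr hxin)
          rw [hSe, pluck_zero_of_card_ne M' (by rw [cSeg_card _ (by omega)]; omega),
            mul_zero, mul_zero, mul_zero]
        · have h0S : (0 : ZMod n) ∈ cSeg n (r' + ((i : ℕ) : ZMod n)) K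
              ∪ {(r' + (d : ZMod n)) + ((j : ℕ) : ZMod n)} := Finset.mem_union_left _ h0s
          rw [if_pos h0S, hu, hw]
          simp only
          rw [if_pos h0s, if_neg h0x, one_mul]
      · by_cases h0x : (r' + (d : ZMod n)) + ((j : ℕ) : ZMod n) = 0
        · have h0S : (0 : ZMod n) ∈ cSeg n (r' + ((i : ℕ) : ZMod n)) K
              ∪ {(r' + (d : ZMod n)) + ((j : ℕ) : ZMod n)} :=
            Finset.mem_union_right _ (Finset.mem_singleton.mpr h0x.symm)
          rw [if_pos h0S, hu, hw]
          simp only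
          rw [if_neg h0s, if_pos h0x, one_mul]
        · have h0S : (0 : ZMod n) ∉ cSeg n (r' + ((i : ℕ) : ZMod n)) K
              ∪ {(r' + (d : ZMod n)) + ((j : ℕ) : ZMod n)} := by
            rw [Finset.mem_union, Finset.mem_singleton]
            push_neg
            exact ⟨h0s, fun h => h0x h.symm⟩
          rw [if_neg h0S, hu, hw]
          simp only
          rw [if_neg h0s, if_neg h0x, one_mul, one_mul]
    have hLHS : Matrix.det (Matrix.of fun i j : Fin (K+1) =>
          pluck M (cSeg n ((r' + 1) + ((i : ℕ) : ZMod n)) K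
            ∪ {((r' + 1) + (d : ZMod n)) + ((j : ℕ) : ZMod n)}))
        = (∏ i : Fin (K+1), u (i : ℕ)) * ((∏ j : Fin (K+1), w (j : ℕ)) *
            Matrix.det (Matrix.of fun i j : Fin (K+1) =>
              pluck M' (cSeg n (r' + ((i : ℕ) : ZMod n)) K
                ∪ {(r' + (d : ZMod n)) + ((j : ℕ) : ZMod n)}))) := by
      have h1 : (Matrix.of fun i j : Fin (K+1) =>
          pluck M (cSeg n ((r' + 1) + ((i : ℕ) : ZMod n)) K
            ∪ {((r' + 1) + (d : ZMod n)) + ((j : ℕ) : ZMod n)}))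
          = Matrix.of (fun i j : Fin (K+1) => u (i : ℕ) *
              (Matrix.of (fun i' j' : Fin (K+1) => w (j' : ℕ) *
                pluck M' (cSeg n (r' + ((i' : ℕ) : ZMod n)) K
                  ∪ {(r' + (d : ZMod n)) + ((j' : ℕ) : ZMod n)})) i j)) := by
        ext i j
        simp only [Matrix.of_apply]
        exact hentry i j
      rw [h1, Matrix.det_mul_column]
      congr 1
      exact Matrix.det_mul_row (fun j : Fin (K+1) => w (j : ℕ)) (Matrix.of fun i j : Fin (K+1) =>
        pluck M' (cSeg n (r' + ((i : ℕ) : ZMod n)) K ∪ {(r' + (d : ZMod n)) + ((j : ℕ) : ZMod n)}))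
    have hseg : ∀ l : ℕ,
        pluck M (cSeg n ((r' + 1) + ((l : ℕ) : ZMod n)) (K+1))
        = (if (0 : ZMod n) ∈ cSeg n (r' + ((l : ℕ) : ZMod n)) (K+1) then (-1 : R) ^ K else 1) *
            pluck M' (cSeg n (r' + ((l : ℕ) : ZMod n)) (K+1)) := by
      intro l
      have h1 : cSeg n ((r' + 1) + ((l : ℕ) : ZMod n)) (K+1)
          = (cSeg n (r' + ((l : ℕ) : ZMod n)) (K+1)).image (· + 1) := by
        rw [cSeg_image_shift]
        congr 1
        ring
      rw [h1, pluck_shift hn M]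
    have hIH := ih M' d hd1 hd2
    rw [hLHS, Finset.prod_congr rfl (fun l _ => hseg l), hseg d, hIH,
      Finset.prod_mul_distrib]
    have hprodw : (∏ j : Fin (K+1), w (j : ℕ))
        = (if (0 : ZMod n) ∈ cSeg n (r' + (d : ZMod n)) (K+1) then (-1 : R) ^ K else 1) := by
      by_cases h0 : (0 : ZMod n) ∈ cSeg n (r' + (d : ZMod n)) (K+1)
      · rw [if_pos h0]
        have h0' := h0
        simp only [cSeg, Finset.mem_image, Finset.mem_range] at h0'
        obtain ⟨t, ht, hteq⟩ := h0'
        rw [Finset.prod_eq_single (⟨t, ht⟩ : Fin (K+1))]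
        · rw [hw]
          simp only
          exact if_pos hteq
        · intro b _ hb
          rw [hw]
          simp only
          rw [if_neg]
          intro hbeq
          apply hb
          have h2 : ((b : ℕ) : ZMod n) = ((t : ℕ) : ZMod n) :=
            add_left_cancel (hbeq.trans hteq.symm)
          have h3 := congrArg ZMod.val h2
          rw [ZMod.val_natCast_of_lt (by have := b.isLt; omega),
            ZMod.val_natCast_of_lt (by omega)] at h3
          exact Fin.ext h3
        · intro h
          exact absurd (Finset.mem_univ _) h
      · rw [if_neg h0]
        apply Finset.prod_eq_one
        intro j _
        rw [hw]
        simp only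
        rw [if_neg]
        intro hj
        apply h0
        simp only [cSeg, Finset.mem_image, Finset.mem_range]
        exact ⟨(j : ℕ), j.isLt, hj⟩
    have hcond1 : ∀ t : ℕ, t < n →
        ((0 : ZMod n) ∈ cSeg n (r' + ((t : ℕ) : ZMod n)) K
          ↔ (if t ≤ ζ then ζ - t else ζ + n - t) < K) := by
      intro t ht
      rw [zero_mem_cSeg_iff (by omega)]
      have h1 : (0 : ZMod n) - (r' + ((t : ℕ) : ZMod n))
          = ((ζ : ℕ) : ZMod n) - ((t : ℕ) : ZMod n) := by rw [hzr]; ring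
      rw [h1, val_sub_nat hζlt ht]
    have hcond2 : ∀ t : ℕ, t < n →
        ((0 : ZMod n) ∈ cSeg n (r' + ((t : ℕ) : ZMod n)) (K+1)
          ↔ (if t ≤ ζ then ζ - t else ζ + n - t) < K + 1) := by
      intro t ht
      rw [zero_mem_cSeg_iff (by omega)]
      have h1 : (0 : ZMod n) - (r' + ((t : ℕ) : ZMod n))
          = ((ζ : ℕ) : ZMod n) - ((t : ℕ) : ZMod n) := by rw [hzr]; ring
      rw [h1, val_sub_nat hζlt ht]
    have hprodu : (∏ i : Fin (K+1), u (i : ℕ))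
        = ∏ l ∈ Finset.range K,
            (if (0 : ZMod n) ∈ cSeg n (r' + ((l : ℕ) : ZMod n)) (K+1)
              then (-1 : R) ^ K else 1) := by
      calc (∏ i : Fin (K+1), u (i : ℕ)) = ∏ t ∈ Finset.range (K+1), u t :=
            Fin.prod_univ_eq_prod_range u (K+1)
        _ = ∏ t ∈ Finset.range (K+1), ((-1 : R) ^ K) ^
              (if (if t ≤ ζ then ζ - t else ζ + n - t) < K then 1 else 0) := by
            apply Finset.prod_congr rfl
            intro t ht
            rw [Finset.mem_range] at ht
            rw [hu]
            simp only
            rw [if_congr (hcond1 t (by omega)) rfl rfl]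
            split_ifs <;> simp
        _ = ((-1 : R) ^ K) ^ (∑ t ∈ Finset.range (K+1),
              if (if t ≤ ζ then ζ - t else ζ + n - t) < K then 1 else 0) :=
            Finset.prod_pow_eq_pow_sum _ _ _
        _ = ((-1 : R) ^ K) ^ (∑ l ∈ Finset.range K,
              if (if l ≤ ζ then ζ - l else ζ + n - l) < K + 1 then 1 else 0) := by
            rw [count_identity K hK hn hζlt]
        _ = ∏ l ∈ Finset.range K, ((-1 : R) ^ K) ^
              (if (if l ≤ ζ then ζ - l else ζ + n - l) < K + 1 then 1 else 0) :=
            (Finset.prod_pow_eq_pow_sum _ _ _).symm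
        _ = ∏ l ∈ Finset.range K,
            (if (0 : ZMod n) ∈ cSeg n (r' + ((l : ℕ) : ZMod n)) (K+1)
              then (-1 : R) ^ K else 1) := by
            apply Finset.prod_congr rfl
            intro l hl
            rw [Finset.mem_range] at hl
            rw [if_congr (hcond2 l (by omega)) rfl rfl]
            split_ifs <;> simp
    rw [hprodw, hprodu]
    ring

end Part8

theorem statement1 {R : Type*} [CommRing R] (k n : ℕ) (hk : 2 ≤ k) (hkn : 2 * k ≤ n)
    (M : Matrix (Fin k) (ZMod n) R) (r m : ZMod n)
    (hm : m ∈ cIcc n (r + (k : ZMod n) - 1) (r - 1)) :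
    Matrix.det (Matrix.of fun i j : Fin k =>
        pluck M (cSeg n (r + ((i : ℕ) : ZMod n)) (k - 1) ∪ {m + ((j : ℕ) : ZMod n)})) =
      (∏ l ∈ Finset.range (k - 1), pluck M (cSeg n (r + (l : ZMod n)) k)) *
        pluck M (cSeg n m k) := by
  have hn0 : NeZero n := ⟨by omega⟩
  obtain ⟨d, hd1, hd2, hmd⟩ := hm_unpack hk hkn r m hm
  obtain ⟨K, rfl⟩ : ∃ K, k = K + 1 := ⟨k - 1, by omega⟩
  have hK : 1 ≤ K := by omega
  have hd1' : K ≤ d := by omega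
  have hr : r = 1 + (((r - 1).val : ℕ) : ZMod n) := by
    rw [ZMod.natCast_rightInverse (r - 1)]
    ring
  rw [hmd, hr]
  simp only [Nat.add_sub_cancel]
  exact main_aux K hK (by omega) ((r - 1).val) M d hd1' hd2
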